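/- Let k, q ≥ 1. The class T^k_q is closed under taking minors and under taking disjoint unions, and T^k_q is a subclass of TW_{k−1} ∩ TD_q. -/

import Mathlib

set_option maxHeartbeats 1000000

/-! ## Bundled finite simple graphs and homomorphism counting -/

/-- A bundled finite simple graph (vertex set `Fin n`). -/
abbrev GraphB : Type := Σ n : ℕ, SimpleGraph (Fin n)

/-- The number of graph homomorphisms from `F` to `G`. -/
noncomputable def homCount {V W : Type*} (F : SimpleGraph V) (G : SimpleGraph W) : ℕ :=
  Set.ncard {f : V → W | ∀ ⦃u v⦄, F.Adj u v → G.Adj (f u) (f v)}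

/-- `G` and `H` are homomorphism indistinguishable over the class `𝓕`. -/
def HomIndist (𝓕 : Set GraphB) {V W : Type*} (G : SimpleGraph V) (H : SimpleGraph W) : Prop :=
  ∀ A ∈ 𝓕, homCount A.2 G = homCount A.2 H

/-- The homomorphism distinguishing closure of the class `𝓕`. -/
def hdCl (𝓕 : Set GraphB) : Set GraphB :=
  {A | ∀ G H : GraphB, HomIndist 𝓕 G.2 H.2 → homCount A.2 G.2 = homCount A.2 H.2}

/-! ## Pebble forest covers and the class `T^k_q` -/

/-- A `k`-pebble forest cover of depth at most `q`.  The rooted forest is encoded by its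
ancestor (partial) order `le`, in which the set of ancestors of any vertex is a chain. -/
structure PebbleForestCover {V : Type*} (G : SimpleGraph V) (k q : ℕ) where
  le : V → V → Prop
  le_refl : ∀ v, le v v
  le_antisymm : ∀ u v, le u v → le v u → u = v
  le_trans : ∀ u v w, le u v → le v w → le u w
  downChain : ∀ u v w, le u w → le v w → le u v ∨ le v u
  peb : V → Fin k
  cover : ∀ ⦃u v⦄, G.Adj u v → le u v ∨ le v u
  pebbleCond : ∀ ⦃u v w⦄, G.Adj u v → le u v → le u w → le w v → u ≠ w → peb u ≠ peb w
  heightLE : ∀ v, Set.ncard {u | le u v} ≤ q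

def HasPFC {V : Type*} (G : SimpleGraph V) (k q : ℕ) : Prop :=
  Nonempty (PebbleForestCover G k q)

/-- The class `T^k_q` of graphs admitting a `k`-pebble forest cover of depth at most `q`. -/
def Tclass (k q : ℕ) : Set GraphB := {G | HasPFC G.2 k q}

/-! ## Forest covers, treedepth, tree decompositions, treewidth -/

/-- `G` has a forest cover of height at most `q`, i.e. treedepth at most `q`. -/
def HasForestCover {V : Type*} (G : SimpleGraph V) (q : ℕ) : Prop :=
  ∃ le : V → V → Prop,
    (∀ v, le v v) ∧ (∀ u v, le u v → le v u → u = v) ∧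
    (∀ u v w, le u v → le v w → le u w) ∧
    (∀ u v w, le u w → le v w → le u v ∨ le v u) ∧
    (∀ ⦃u v⦄, G.Adj u v → le u v ∨ le v u) ∧
    (∀ v, Set.ncard {u | le u v} ≤ q)

/-- The class `TD_q` of graphs of treedepth at most `q`. -/
def TDclass (q : ℕ) : Set GraphB := {G | HasForestCover G.2 q}

/-- A tree decomposition of `G`. -/
structure TreeDecomp {V : Type*} (G : SimpleGraph V) where
  n : ℕ
  T : SimpleGraph (Fin n)
  isTree : T.IsTree
  bag : Fin n → Set V
  coversVerts : ∀ v : V, ∃ t, v ∈ bag t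
  coversEdges : ∀ ⦃u v⦄, G.Adj u v → ∃ t, u ∈ bag t ∧ v ∈ bag t
  bagsConnected : ∀ v : V, (SimpleGraph.induce {t | v ∈ bag t} T).Connected

/-- The decomposition has width at most `w`. -/
def TreeDecomp.widthLE {V : Type*} {G : SimpleGraph V} (d : TreeDecomp G) (w : ℕ) : Prop :=
  ∀ t, (d.bag t).ncard ≤ w + 1

/-- `t` lies on the (unique) path from `r` to `s` in the tree `d.T`,
i.e. `t` is an ancestor of `s` when `d.T` is rooted at `r`. -/
def TreeDecomp.anc {V : Type*} {G : SimpleGraph V} (d : TreeDecomp G) (r t s : Fin d.n) : Prop :=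
  ∀ w : d.T.Walk r s, t ∈ w.support

/-- The decomposition has depth at most `q`: for some root `r`, for every node `s`,
the union of the bags of ancestors of `s` has at most `q` vertices. -/
def TreeDecomp.depthLE {V : Type*} {G : SimpleGraph V} (d : TreeDecomp G) (q : ℕ) : Prop :=
  ∃ r : Fin d.n, ∀ s : Fin d.n, (⋃ t ∈ {t | d.anc r t s}, d.bag t).ncard ≤ q

/-- The class `TW_w` of graphs of treewidth at most `w`. -/
def TWclass (w : ℕ) : Set GraphB := {G | ∃ d : TreeDecomp G.2, d.widthLE w}

/-! ## Minors and disjoint unions -/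

/-- `H` is a minor of `G`: there are pairwise disjoint connected nonempty branch sets in `G`,
one for each vertex of `H`, such that edges of `H` are realised between branch sets. -/
def IsMinor {W V : Type*} (H : SimpleGraph W) (G : SimpleGraph V) : Prop :=
  ∃ φ : V → Option W,
    (∀ w : W, (SimpleGraph.induce {v | φ v = some w} G).Connected) ∧
    (∀ ⦃w₁ w₂⦄, H.Adj w₁ w₂ → ∃ v₁ v₂, φ v₁ = some w₁ ∧ φ v₂ = some w₂ ∧ G.Adj v₁ v₂)

/-- The disjoint union of two simple graphs. -/
def sumGraph {V W : Type*} (G : SimpleGraph V) (H : SimpleGraph W) : SimpleGraph (V ⊕ W) where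
  Adj x y :=
    match x, y with
    | Sum.inl a, Sum.inl b => G.Adj a b
    | Sum.inr a, Sum.inr b => H.Adj a b
    | _, _ => False
  symm := by
    constructor
    rintro (a | a) (b | b) h
    · exact G.symm.symm _ _ h
    · exact h.elim
    · exact h.elim
    · exact H.symm.symm _ _ h
  loopless := by
    constructor
    rintro (a | a) h
    · exact G.loopless.irrefl a h
    · exact H.loopless.irrefl a h

/-! ## Cops-and-robber games -/

/-- A robber move from `v` to `u`: a walk in `G` none of whose vertices lies in `A`
(`A` will be `X ∩ Y` for old/new cop positions `X`, `Y` on `G` plus a `k`-clique). -/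
def RobberMove {V : Type*} {k : ℕ} (G : SimpleGraph V) (A : Finset (V ⊕ Fin k)) (v u : V) :
    Prop :=
  ∃ w : G.Walk v u, ∀ x ∈ w.support, Sum.inl x ∉ A

/-- The initial cop position: all `k` cops on the auxiliary clique. -/
def initPos (V : Type*) [DecidableEq V] (k : ℕ) : Finset (V ⊕ Fin k) :=
  Finset.univ.image Sum.inr

/-- In the (non-monotone) cops-and-robber game on `G` with `k` cops, from cop position `X`
and robber position `v`, Cops can catch the robber within `q` further rounds. -/
def CopsCatch {V : Type*} [DecidableEq V] (G : SimpleGraph V) (k : ℕ) :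
    ℕ → Finset (V ⊕ Fin k) → V → Prop
  | 0, _, _ => False
  | q + 1, X, v =>
      ∃ Y : Finset (V ⊕ Fin k), Y.card = k ∧ (X ∩ Y).card = k - 1 ∧
        ∀ u : V, RobberMove G (X ∩ Y) v u → (Sum.inl u ∈ Y ∨ CopsCatch G k q Y u)

/-- Monotone variant: Cops may only move so that the robber escape space does not grow. -/
def MonCopsCatch {V : Type*} [DecidableEq V] (G : SimpleGraph V) (k : ℕ) :
    ℕ → Finset (V ⊕ Fin k) → V → Prop
  | 0, _, _ => False
  | q + 1, X, v =>
      ∃ Y : Finset (V ⊕ Fin k), Y.card = k ∧ (X ∩ Y).card = k - 1 ∧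
        (∀ u : V, RobberMove G (X ∩ Y) v u → RobberMove G X v u) ∧
        ∀ u : V, RobberMove G (X ∩ Y) v u → (Sum.inl u ∈ Y ∨ MonCopsCatch G k q Y u)

/-- Robber can evade capture for `q` further rounds from cop position `X`, robber at `v`. -/
def RobberEsc {V : Type*} [DecidableEq V] (G : SimpleGraph V) (k : ℕ) :
    ℕ → Finset (V ⊕ Fin k) → V → Prop
  | 0, _, _ => True
  | q + 1, X, v =>
      ∀ Y : Finset (V ⊕ Fin k), Y.card = k → (X ∩ Y).card = k - 1 →
        ∃ u : V, RobberMove G (X ∩ Y) v u ∧ Sum.inl u ∉ Y ∧ RobberEsc G k q Y u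

/-- Cops has a winning strategy in the `q`-round `k`-cops-and-robber game on `G`. -/
def CopsWinGame {V : Type*} [DecidableEq V] (G : SimpleGraph V) (k q : ℕ) : Prop :=
  ∀ v : V, CopsCatch G k q (initPos V k) v

/-- Cops has a winning strategy in the monotone `q`-round `k`-cops-and-robber game on `G`. -/
def MonCopsWinGame {V : Type*} [DecidableEq V] (G : SimpleGraph V) (k q : ℕ) : Prop :=
  ∀ v : V, MonCopsCatch G k q (initPos V k) v

/-- Robber has a winning strategy in the `q`-round `k`-cops-and-robber game on `G`. -/
def RobberWinsGame {V : Type*} [DecidableEq V] (G : SimpleGraph V) (k q : ℕ) : Prop :=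
  ∃ v : V, RobberEsc G k q (initPos V k) v

/-- The `h × ℓ` grid graph. -/
def gridGraph (h l : ℕ) : SimpleGraph (Fin h × Fin l) :=
  (SimpleGraph.pathGraph h).boxProd (SimpleGraph.pathGraph l)

/-! ## The CFI-like construction `G_U` -/

/-- Vertices of `G_U`: pairs `(v, S)` with `S` a set of edges incident to `v` whose
parity matches `|{v} ∩ U|`. -/
def CFIvert {V : Type*} (G : SimpleGraph V) (U : Set V) : Type _ :=
  {p : V × Set (Sym2 V) // p.2 ⊆ G.incidenceSet p.1 ∧ (Even p.2.ncard ↔ p.1 ∉ U)}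

/-- The CFI-like graph `G_U` of Roberson. -/
def CFI {V : Type*} (G : SimpleGraph V) (U : Set V) : SimpleGraph (CFIvert G U) where
  Adj x y := G.Adj x.1.1 y.1.1 ∧ s(x.1.1, y.1.1) ∉ symmDiff x.1.2 y.1.2
  symm := by
    constructor
    rintro x y ⟨h1, h2⟩
    refine ⟨h1.symm, ?_⟩
    rw [Sym2.eq_swap, symmDiff_comm]
    exact h2
  loopless := by
    constructor
    rintro x ⟨h1, _⟩
    exact G.loopless.irrefl _ h1

/-! ## Counting first-order logic -/

/-- Formulae of first-order counting logic `C` with variables indexed by `α`. -/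
inductive CForm (α : Type) : Type
  | eq : α → α → CForm α
  | adj : α → α → CForm α
  | not : CForm α → CForm α
  | or : CForm α → CForm α → CForm α
  | and : CForm α → CForm α → CForm α
  | count : ℕ → α → CForm α → CForm α

namespace CForm

variable {α : Type} [DecidableEq α]

/-- Quantifier rank. -/
def qr : CForm α → ℕ
  | eq _ _ => 0
  | adj _ _ => 0
  | not φ => qr φ
  | or φ ψ => max (qr φ) (qr ψ)
  | and φ ψ => max (qr φ) (qr ψ)
  | count _ _ φ => qr φ + 1

/-- Free variables. -/
def freeVars : CForm α → Finset α
  | eq i j => {i, j}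
  | adj i j => {i, j}
  | not φ => freeVars φ
  | or φ ψ => freeVars φ ∪ freeVars ψ
  | and φ ψ => freeVars φ ∪ freeVars ψ
  | count _ i φ => (freeVars φ).erase i

/-- Satisfaction in a simple graph, relative to a partial variable assignment. -/
def Sat {V : Type*} (G : SimpleGraph V) : CForm α → (α → Option V) → Prop
  | eq i j, a => ∃ v, a i = some v ∧ a j = some v
  | adj i j, a => ∃ v w, a i = some v ∧ a j = some w ∧ G.Adj v w
  | not φ, a => ¬ Sat G φ a
  | or φ ψ, a => Sat G φ a ∨ Sat G ψ a
  | and φ ψ, a => Sat G φ a ∧ Sat G ψ a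
  | count t i φ, a =>
      ∃ s : Finset V, t ≤ s.card ∧ ∀ v ∈ s, Sat G φ (fun j => if j = i then some v else a j)

/-- Guarded formulae: every quantifier occurs as `∃^{≥t} y (E x y ∧ ψ)` with `x ≠ y`. -/
def Guarded : CForm α → Prop
  | count _ y (and (adj x y') χ) => y' = y ∧ x ≠ y ∧ Guarded χ
  | count _ _ _ => False
  | eq _ _ => True
  | adj _ _ => True
  | not φ => Guarded φ
  | or φ ψ => Guarded φ ∧ Guarded ψ
  | and φ ψ => Guarded φ ∧ Guarded ψ

end CForm

/-! ## Labelled graphs, products, construction trees -/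

/-- A `k`-labelled finite graph. -/
structure LGraph (k : ℕ) : Type 1 where
  V : Type
  fin : Finite V
  G : SimpleGraph V
  ν : Fin k → Option V

namespace LGraph

variable {k : ℕ}

/-- Number of homomorphisms between `k`-labelled graphs. -/
noncomputable def lhomCount (F G : LGraph k) : ℕ :=
  Set.ncard {f : F.V → G.V |
    (∀ ⦃u v⦄, F.G.Adj u v → G.G.Adj (f u) (f v)) ∧
    ∀ i v, F.ν i = some v → ∃ w, G.ν i = some w ∧ f v = w}

/-- Remove label `i`. -/
def removeLabel (A : LGraph k) (i : Fin k) : LGraph k :=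
  { A with ν := fun j => if j = i then none else A.ν j }

/-- Every vertex carries at least one label. -/
def FullyLabelled (A : LGraph k) : Prop := ∀ v : A.V, ∃ i, A.ν i = some v

/-- Adjacency on the disjoint sum of two labelled graphs. -/
def sumAdj (A B : LGraph k) : A.V ⊕ B.V → A.V ⊕ B.V → Prop
  | Sum.inl u, Sum.inl v => A.G.Adj u v
  | Sum.inr u, Sum.inr v => B.G.Adj u v
  | _, _ => False

lemma sumAdj_symm (A B : LGraph k) : ∀ x y, sumAdj A B x y → sumAdj A B y x := by
  rintro (u | u) (v | v) h
  · exact A.G.symm.symm _ _ h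
  · exact h.elim
  · exact h.elim
  · exact B.G.symm.symm _ _ h

/-- The gluing relation: vertices carrying the same label get identified. -/
def glue (A B : LGraph k) : A.V ⊕ B.V → A.V ⊕ B.V → Prop := fun x y =>
  ∃ i : Fin k, (A.ν i).map Sum.inl = some x ∧ (B.ν i).map Sum.inr = some y

/-- The product of two `k`-labelled graphs: disjoint union, identify equally labelled
vertices, suppress loops and parallel edges. -/
def product (A B : LGraph k) : LGraph k where
  V := Quot (glue A B)
  fin := by
    haveI := A.fin
    haveI := B.fin
    exact Finite.of_surjective (Quot.mk _) (fun x => Quot.inductionOn x fun a => ⟨a, rfl⟩)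
  G :=
    { Adj := fun x y =>
        x ≠ y ∧ ∃ u v, Quot.mk _ u = x ∧ Quot.mk _ v = y ∧ sumAdj A B u v
      symm := by
        constructor
        rintro x y ⟨hne, u, v, hu, hv, h⟩
        exact ⟨hne.symm, v, u, hv, hu, sumAdj_symm A B u v h⟩
      loopless := ⟨fun x h => h.1 rfl⟩ }
  ν := fun i =>
    ((A.ν i).map fun v => Quot.mk _ (Sum.inl v)).orElse
      fun _ => (B.ν i).map fun v => Quot.mk _ (Sum.inr v)

/-- Isomorphism of labelled graphs. -/
def LIso (A B : LGraph k) : Prop :=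
  ∃ e : A.G ≃g B.G, ∀ i, (A.ν i).map (fun v => e v) = B.ν i

end LGraph

/-- `k`-construction trees: leaves carry (fully labelled) graphs, unary nodes remove
one label, binary nodes take products. -/
inductive CT (k : ℕ) : Type 1
  | leaf : LGraph k → CT k
  | elim : Fin k → CT k → CT k
  | prod : CT k → CT k → CT k

namespace CT

variable {k : ℕ}

/-- The labelled graph constructed by a construction tree. -/
def graphOf : CT k → LGraph k
  | leaf A => A
  | elim i t => (graphOf t).removeLabel i
  | prod t₁ t₂ => (graphOf t₁).product (graphOf t₂)

/-- Validity: leaves are fully labelled and elimination nodes remove an assigned label. -/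
def Valid : CT k → Prop
  | leaf A => A.FullyLabelled
  | elim i t => Valid t ∧ (graphOf t).ν i ≠ none
  | prod t₁ t₂ => Valid t₁ ∧ Valid t₂

/-- Guarded validity: labels may only be removed from vertices with a labelled neighbour. -/
def GuardedValid : CT k → Prop
  | leaf A => A.FullyLabelled
  | elim i t => GuardedValid t ∧
      ∃ v, (graphOf t).ν i = some v ∧
        ∃ j w, (graphOf t).ν j = some w ∧ (graphOf t).G.Adj v w
  | prod t₁ t₂ => GuardedValid t₁ ∧ GuardedValid t₂

/-- The elimination depth: maximal number of elimination nodes on a root-to-leaf path. -/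
def elimDepth : CT k → ℕ
  | leaf _ => 0
  | elim _ t => elimDepth t + 1
  | prod t₁ t₂ => max (elimDepth t₁) (elimDepth t₂)

end CT

/-- The class `L^k_q` of `k`-labelled graphs admitting a `k`-construction tree of
elimination depth at most `q`. -/
def Lclass (k q : ℕ) : Set (LGraph k) :=
  {F | ∃ t : CT k, CT.Valid t ∧ CT.elimDepth t ≤ q ∧ LGraph.LIso (CT.graphOf t) F}

/-- The class `GL^k_q`: as `L^k_q`, but labels may only be removed from vertices with a
labelled neighbour. -/
def GLclass (k q : ℕ) : Set (LGraph k) :=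
  {F | ∃ t : CT k, CT.GuardedValid t ∧ CT.elimDepth t ≤ q ∧ LGraph.LIso (CT.graphOf t) F}

/-- The class `GE^k_q` of unlabelled graphs underlying graphs in `GL^k_q`. -/
def GEclass (k q : ℕ) : Set GraphB :=
  {G | ∃ F ∈ GLclass k q, Nonempty (F.G ≃g G.2)}

/-! ## The bijective pebble game -/

/-- `γ` is a partial isomorphism between `G` and `H`. -/
def PartialIso {V W : Type*} (G : SimpleGraph V) (H : SimpleGraph W) {k : ℕ}
    (γ : Fin k → Option (V × W)) : Prop :=
  ∀ i j vi wi vj wj, γ i = some (vi, wi) → γ j = some (vj, wj) →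
    ((vi = vj ↔ wi = wj) ∧ (G.Adj vi vj ↔ H.Adj wi wj))

/-- Duplicator wins the `q`-round bijective `k`-pebble game on `G` and `H` from position `γ`. -/
def DupWins {V W : Type*} (G : SimpleGraph V) (H : SimpleGraph W) (k : ℕ) :
    ℕ → (Fin k → Option (V × W)) → Prop
  | 0, γ => PartialIso G H γ
  | q + 1, γ => PartialIso G H γ ∧
      ∀ p : Fin k, ∃ f : V ≃ W, ∀ v : V,
        DupWins G H k q (fun j => if j = p then some (v, f v) else γ j)


namespace TCPaux

/-- A bag system: the order-theoretic equivalent of a pebble forest cover. -/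
structure Bag {V : Type*} (G : SimpleGraph V) (k q : ℕ) where
  le : V → V → Prop
  refl : ∀ v, le v v
  antisymm : ∀ u v, le u v → le v u → u = v
  trans : ∀ u v w, le u v → le v w → le u w
  downChain : ∀ u v w, le u w → le v w → le u v ∨ le v u
  cover : ∀ ⦃u v⦄, G.Adj u v → le u v ∨ le v u
  bag : V → Set V
  bag_sub : ∀ v u, u ∈ bag v → le u v
  mem_self : ∀ v, v ∈ bag v
  bag_card : ∀ v, (bag v).ncard ≤ k
  edge_mem : ∀ ⦃u v⦄, G.Adj u v → le u v → u ∈ bag v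
  nest : ∀ u v w, u ∈ bag v → le u w → le w v → u ∈ bag w
  height : ∀ v, {u | le u v}.ncard ≤ q

namespace Bag

variable {V : Type*} {G : SimpleGraph V} {k q : ℕ}

/-- From a pebble forest cover, produce a bag system. -/
noncomputable def ofPFC (c : PebbleForestCover G k q) : Bag G k q where
  le := c.le
  refl := c.le_refl
  antisymm := c.le_antisymm
  trans := c.le_trans
  downChain := c.downChain
  cover := c.cover
  bag := fun v => {u | c.le u v ∧ ∀ w, c.le u w → c.le w v → u ≠ w → c.peb u ≠ c.peb w}
  bag_sub := fun v u hu => hu.1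
  mem_self := fun v => ⟨c.le_refl v, fun w h1 h2 hne => absurd (c.le_antisymm _ _ h2 h1) hne.symm⟩
  bag_card := by
    intro v
    have hinj : Set.InjOn c.peb {u | c.le u v ∧ ∀ w, c.le u w → c.le w v → u ≠ w → c.peb u ≠ c.peb w} := by
      intro a ha b hb hab
      by_contra hne
      rcases c.downChain a b v ha.1 hb.1 with h | h
      · exact ha.2 b h hb.1 hne hab
      · exact hb.2 a h ha.1 (Ne.symm hne) hab.symm
    calc ({u | c.le u v ∧ ∀ w, c.le u w → c.le w v → u ≠ w → c.peb u ≠ c.peb w}).ncard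
        ≤ (Set.univ : Set (Fin k)).ncard :=
          Set.ncard_le_ncard_of_injOn c.peb (fun a _ => Set.mem_univ _) hinj (Set.finite_univ)
      _ = k := by rw [Set.ncard_univ, Nat.card_eq_fintype_card, Fintype.card_fin]
  edge_mem := fun u v hadj hle =>
    ⟨hle, fun w h1 h2 hne => c.pebbleCond hadj hle h1 h2 hne⟩
  nest := by
    intro u v w hu h1 h2
    exact ⟨h1, fun x hx1 hx2 hne => hu.2 x hx1 (c.le_trans _ _ _ hx2 h2) hne⟩
  height := c.heightLE

section Depth
variable {W : Type*} {H : SimpleGraph W}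

variable [Finite V] (B : Bag G k q)

/-- Depth of a vertex in the forest order. -/
noncomputable def d (v : V) : ℕ := {u | B.le u v}.ncard

lemma anc_subset {a b : V} (h : B.le a b) : {x | B.le x a} ⊆ {x | B.le x b} :=
  fun x hx => B.trans x a b hx h

lemma d_mono {a b : V} (h : B.le a b) : B.d a ≤ B.d b :=
  Set.ncard_le_ncard (B.anc_subset h) (Set.toFinite _)

lemma eq_of_le_of_d_le {a b : V} (h : B.le a b) (hd : B.d b ≤ B.d a) : a = b := by
  have hs := Set.eq_of_subset_of_ncard_le (B.anc_subset h) hd (Set.toFinite _)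
  have : b ∈ {x | B.le x a} := by rw [hs]; exact B.refl b
  exact B.antisymm a b h this

lemma d_lt_of_ne {a b : V} (h : B.le a b) (hne : a ≠ b) : B.d a < B.d b := by
  rcases lt_or_ge (B.d a) (B.d b) with h' | h'
  · exact h'
  · exact absurd (B.eq_of_le_of_d_le h h') hne

lemma d_pos (v : V) : 1 ≤ B.d v :=
  Set.ncard_pos (Set.toFinite _) |>.mpr ⟨v, B.refl v⟩

lemma d_le_q (v : V) : B.d v ≤ q := B.height v

end Depth

section ToPFC
variable [Finite V] (B : Bag G k q) (hk : 1 ≤ k)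

/-- One step of the pebble assignment: pick a pebble avoiding the (recursively
assigned) pebbles of the other members of the bag. -/
noncomputable def pebStep (v : V) (rec : ∀ u : V, B.d u < B.d v → Fin k) : Fin k := by
  classical
  have hfin : (B.bag v \ {v}).Finite := Set.toFinite _
  exact if h : (Finset.univ \ hfin.toFinset.attach.image
      (fun u => rec u.1 (by
        have hu := hfin.mem_toFinset.mp u.2
        exact B.d_lt_of_ne (B.bag_sub v u.1 hu.1) hu.2))).Nonempty
    then h.choose
    else ⟨0, hk⟩

noncomputable def pebFn : V → Fin k :=
  WellFounded.fix (InvImage.wf B.d Nat.lt_wfRel.wf) (B.pebStep hk)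

lemma pebFn_spec : ∀ v, ∀ u ∈ B.bag v, u ≠ v → B.pebFn hk u ≠ B.pebFn hk v := by
  classical
  intro v u hu hne
  have hfix : B.pebFn hk v = B.pebStep hk v (fun u _ => B.pebFn hk u) :=
    WellFounded.fix_eq _ _ v
  have hfin : (B.bag v \ {v}).Finite := Set.toFinite _
  set s : Finset (Fin k) := hfin.toFinset.attach.image
      (fun u => B.pebFn hk u.1) with hs
  have hcard : s.card < k := by
    calc s.card ≤ hfin.toFinset.attach.card := Finset.card_image_le
      _ = hfin.toFinset.card := Finset.card_attach
      _ = (B.bag v \ {v}).ncard := (Set.ncard_eq_toFinset_card _ hfin).symm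
      _ < (B.bag v).ncard := Set.ncard_diff_singleton_lt_of_mem (B.mem_self v) (Set.toFinite _)
      _ ≤ k := B.bag_card v
  have hne' : (Finset.univ \ s).Nonempty := by
    rw [Finset.sdiff_nonempty]
    intro hsub
    exact absurd (Finset.card_le_card hsub) (by simp [hcard.not_ge])
  have hstep : B.pebStep hk v (fun u _ => B.pebFn hk u) ∈ Finset.univ \ s := by
    unfold pebStep
    dsimp only
    split_ifs with h
    · exact h.choose_spec
    · exact absurd hne' h
  have hmem : B.pebFn hk u ∈ s := by
    rw [hs]
    exact Finset.mem_image.mpr ⟨⟨u, hfin.mem_toFinset.mpr ⟨hu, hne⟩⟩, Finset.mem_attach _ _, rfl⟩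
  rw [hfix]
  intro heq
  rw [heq] at hmem
  exact (Finset.mem_sdiff.mp hstep).2 hmem

/-- From a bag system (on a finite vertex type), produce a pebble forest cover. -/
noncomputable def toPFC : PebbleForestCover G k q where
  le := B.le
  le_refl := B.refl
  le_antisymm := B.antisymm
  le_trans := B.trans
  downChain := B.downChain
  peb := B.pebFn hk
  cover := B.cover
  pebbleCond := by
    intro u v w hadj h1 h2 h3 hne
    have huv : u ∈ B.bag v := B.edge_mem hadj h1
    have huw : u ∈ B.bag w := B.nest u v w huv h2 h3
    exact B.pebFn_spec hk w u huw hne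
  heightLE := B.height

end ToPFC
section Walks

/-- Extract a walk staying inside `S` from connectivity of the induced subgraph. -/
lemma walk_in_set {V : Type*} {G : SimpleGraph V} {S : Set V}
    (h : (SimpleGraph.induce S G).Connected) {a b : V} (ha : a ∈ S) (hb : b ∈ S) :
    ∃ w : G.Walk a b, ∀ x ∈ w.support, x ∈ S := by
  obtain ⟨w⟩ := h.preconnected ⟨a, ha⟩ ⟨b, hb⟩
  refine ⟨w.map (SimpleGraph.Embedding.induce S).toHom, ?_⟩
  intro x hx
  have hx' : x ∈ (w.map (SimpleGraph.Embedding.induce S).toHom).support := hx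
  rw [SimpleGraph.Walk.support_map, List.mem_map] at hx'
  obtain ⟨y, _, rfl⟩ := hx'
  exact y.2

end Walks

section Minor
variable [Finite V] (B : Bag G k q)

/-- Along a walk whose support is in `S`, comparability with a fixed
minimal-depth element `m` of `S` propagates. -/
lemma le_of_walk {S : Set V} {m : V} (hm : m ∈ S) (hmin : ∀ x ∈ S, B.d m ≤ B.d x) :
    ∀ {a b : V} (w : G.Walk a b), (∀ x ∈ w.support, x ∈ S) → B.le m a → B.le m b := by
  intro a b w
  induction w with
  | nil => exact fun _ h => h
  | @cons a c b hadj p ih =>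
    intro hsup hma
    have hcS : c ∈ S := hsup c (by simp)
    have hmc : B.le m c := by
      rcases B.cover hadj with h | h
      · exact B.trans m a c hma h
      · rcases B.downChain m c a hma h with h' | h'
        · exact h'
        · have : c = m := B.eq_of_le_of_d_le h' (hmin c hcS)
          rw [this]; exact B.refl m
    exact ih (fun x hx => hsup x (by simp [hx])) hmc

/-- Every nonempty connected set has a top: an element below all others. -/
lemma exists_top {S : Set V} (hconn : (SimpleGraph.induce S G).Connected) :
    ∃ m ∈ S, ∀ x ∈ S, B.le m x := by
  have hne : S.Nonempty := by
    obtain ⟨⟨x, hx⟩⟩ := hconn.nonempty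
    exact ⟨x, hx⟩
  obtain ⟨m, hmS, hmin⟩ := Finset.exists_min_image (Set.toFinite S).toFinset B.d
    (by simpa [Set.Finite.toFinset_nonempty] using hne)
  rw [Set.Finite.mem_toFinset] at hmS
  refine ⟨m, hmS, fun x hx => ?_⟩
  obtain ⟨w, hw⟩ := walk_in_set hconn hmS hx
  exact B.le_of_walk hmS
    (fun y hy => hmin y ((Set.toFinite S).mem_toFinset.mpr hy)) w hw (B.refl m)

/-- Crossing lemma: a connected set containing a strict descendant of `c` and a
vertex that is not a strict descendant of `c` meets the bag of `c`. -/
lemma crossing {S : Set V} {c : V} :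
    ∀ {y x : V} (w : G.Walk y x), (∀ z ∈ w.support, z ∈ S) →
      B.le c y → c ≠ y → ¬ (B.le c x ∧ c ≠ x) → ∃ b ∈ S, b ∈ B.bag c := by
  intro y x w
  induction w with
  | nil => exact fun _ h1 h2 h3 => absurd ⟨h1, h2⟩ h3
  | @cons y z x hadj p ih =>
    intro hsup hcy hcney hnx
    have hzS : z ∈ S := hsup z (by simp)
    by_cases hz : B.le c z ∧ c ≠ z
    · exact ih (fun t ht => hsup t (by simp [ht])) hz.1 hz.2 hnx
    · by_cases hcz : c = z
      · exact ⟨z, hzS, hcz ▸ B.mem_self c⟩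
      · -- ¬ le c z
        have hncz : ¬ B.le c z := fun h => hz ⟨h, hcz⟩
        have hzy : B.le z y := by
          rcases B.cover hadj with h | h
          · exact absurd (B.trans c y z hcy h) hncz
          · exact h
        have hzc : B.le z c := by
          rcases B.downChain z c y hzy hcy with h | h
          · exact h
          · exact absurd h hncz
        have hzbag : z ∈ B.bag y := B.edge_mem hadj.symm hzy
        exact ⟨z, hzS, B.nest z y c hzbag hzc hcy⟩

/-- A bag system transfers to minors. -/
noncomputable def ofMinor {W : Type*} {H : SimpleGraph W} (B : Bag G k q)
    (φ : V → Option W)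
    (hconn : ∀ w : W, (SimpleGraph.induce {v | φ v = some w} G).Connected)
    (hedge : ∀ ⦃w₁ w₂⦄, H.Adj w₁ w₂ → ∃ v₁ v₂, φ v₁ = some w₁ ∧ φ v₂ = some w₂ ∧ G.Adj v₁ v₂) :
    Bag H k q := by
  classical
  -- the top of each branch set
  have htop : ∀ w : W, ∃ m ∈ {v | φ v = some w}, ∀ x ∈ {v | φ v = some w}, B.le m x :=
    fun w => B.exists_top (hconn w)
  set t : W → V := fun w => (htop w).choose with ht
  have htS : ∀ w, φ (t w) = some w := fun w => (htop w).choose_spec.1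
  have htle : ∀ w, ∀ x, φ x = some w → B.le (t w) x := fun w => (htop w).choose_spec.2
  have htinj : Function.Injective t := by
    intro w1 w2 h
    have := htS w1
    rw [h, htS w2] at this
    exact (Option.some_inj.mp this).symm
  -- the crossing fallback
  have key : ∀ (w' : W) (c u : V), φ u = some w' → B.le c u → c ≠ u →
      B.le (t w') c → t w' ≠ c → ∃ b, φ b = some w' ∧ b ∈ B.bag c := by
    intro w' c u hφu hcu hcnu htlec htnec
    obtain ⟨wk, hwk⟩ := walk_in_set (hconn w') hφu (htS w')
    obtain ⟨b, hb1, hb2⟩ := B.crossing wk hwk hcu hcnu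
      (fun h => htnec (B.antisymm _ _ htlec h.1))
    exact ⟨b, hb1, hb2⟩
  refine
  { le := fun w1 w2 => B.le (t w1) (t w2)
    refl := fun w => B.refl _
    antisymm := fun w1 w2 h1 h2 => htinj (B.antisymm _ _ h1 h2)
    trans := fun w1 w2 w3 h1 h2 => B.trans _ _ _ h1 h2
    downChain := fun w1 w2 w3 h1 h2 => B.downChain _ _ _ h1 h2
    cover := ?_
    bag := fun w2 => {w1 | ∃ u, φ u = some w1 ∧ u ∈ B.bag (t w2)}
    bag_sub := ?_
    mem_self := fun w => ⟨t w, htS w, B.mem_self _⟩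
    bag_card := ?_
    edge_mem := ?_
    nest := ?_
    height := ?_ }
  · -- cover
    intro w1 w2 hadj
    obtain ⟨v1, v2, hφ1, hφ2, hGadj⟩ := hedge hadj
    have h1 := htle w1 v1 hφ1
    have h2 := htle w2 v2 hφ2
    rcases B.cover hGadj with h | h
    · exact B.downChain _ _ v2 (B.trans _ _ _ h1 h) h2
    · rcases B.downChain _ _ v1 h1 (B.trans _ _ _ h2 h) with h' | h'
      · exact Or.inl h'
      · exact Or.inr h'
  · -- bag_sub
    rintro w2 w1 ⟨u, hφu, hub⟩
    exact B.trans _ u _ (htle w1 u hφu) (B.bag_sub _ u hub)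
  · -- bag_card
    intro w2
    set f : W → V := fun w1 =>
      if h : ∃ u, φ u = some w1 ∧ u ∈ B.bag (t w2) then h.choose else t w2 with hf
    have hmap : ∀ w1 ∈ {w1 | ∃ u, φ u = some w1 ∧ u ∈ B.bag (t w2)}, f w1 ∈ B.bag (t w2) := by
      intro w1 h
      have h' : ∃ u, φ u = some w1 ∧ u ∈ B.bag (t w2) := h
      simp only [hf, dif_pos h']
      exact h'.choose_spec.2
    have hinj : Set.InjOn f {w1 | ∃ u, φ u = some w1 ∧ u ∈ B.bag (t w2)} := by
      intro a ha b hb hab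
      have ha' : ∃ u, φ u = some a ∧ u ∈ B.bag (t w2) := ha
      have hb' : ∃ u, φ u = some b ∧ u ∈ B.bag (t w2) := hb
      rw [hf] at hab
      simp only [dif_pos ha', dif_pos hb'] at hab
      have h1 := ha'.choose_spec.1
      rw [hab, hb'.choose_spec.1] at h1
      exact Option.some_inj.mp h1.symm
    calc {w1 | ∃ u, φ u = some w1 ∧ u ∈ B.bag (t w2)}.ncard
        ≤ (B.bag (t w2)).ncard := Set.ncard_le_ncard_of_injOn f hmap hinj (Set.toFinite _)
      _ ≤ k := B.bag_card _
  · -- edge_mem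
    intro w1 w2 hadj hle
    obtain ⟨v1, v2, hφ1, hφ2, hGadj⟩ := hedge hadj
    have hne12 : w1 ≠ w2 := hadj.ne
    have htne : t w1 ≠ t w2 := fun h => hne12 (htinj h)
    have hcv2 : B.le (t w2) v2 := htle w2 v2 hφ2
    have hcnev1 : t w2 = v1 → False := by
      intro h
      have := htS w2
      rw [h, hφ1] at this
      exact hne12 (Option.some_inj.mp this)
    rcases B.cover hGadj with hA | hA
    · have h1 : v1 ∈ B.bag v2 := B.edge_mem hGadj hA
      rcases B.downChain v1 (t w2) v2 hA hcv2 with h' | h'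
      · exact ⟨v1, hφ1, B.nest v1 v2 (t w2) h1 h' hcv2⟩
      · exact key w1 (t w2) v1 hφ1 h' (fun h => hcnev1 h) hle htne
    · have h' : B.le (t w2) v1 := B.trans _ v2 v1 hcv2 hA
      exact key w1 (t w2) v1 hφ1 h' (fun h => hcnev1 h) hle htne
  · -- nest
    rintro w' w w'' ⟨u, hφu, hub⟩ hle1 hle2
    by_cases hww : w' = w''
    · exact hww ▸ ⟨t w', htS w', hww ▸ B.mem_self _⟩
    · have hcneu : t w'' ≠ u := by
        intro h
        have := htS w''
        rw [h, hφu] at this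
        exact hww (Option.some_inj.mp this)
      have hu : B.le u (t w) := B.bag_sub _ u hub
      rcases B.downChain u (t w'') (t w) hu hle2 with h' | h'
      · exact ⟨u, hφu, B.nest u (t w) (t w'') hub h' hle2⟩
      · have htne : t w' ≠ t w'' := fun h => hww (htinj h)
        exact key w' (t w'') u hφu h' hcneu hle1 htne
  · -- height
    intro w
    calc {w' | B.le (t w') (t w)}.ncard
        ≤ {u | B.le u (t w)}.ncard := by
          refine Set.ncard_le_ncard_of_injOn t (fun a ha => ha) ?_ (Set.toFinite _)
          exact fun a _ b _ h => htinj h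
      _ ≤ q := B.height _

end Minor
end Bag

section Sum

variable {k q : ℕ}

/-- Transport a pebble forest cover along a graph isomorphism. -/
noncomputable def pfcOfIso {V W : Type*} {G : SimpleGraph V} {G' : SimpleGraph W}
    (e : G ≃g G') (c : PebbleForestCover G' k q) : PebbleForestCover G k q where
  le := fun x y => c.le (e x) (e y)
  le_refl := fun v => c.le_refl _
  le_antisymm := fun u v h1 h2 => e.injective (c.le_antisymm _ _ h1 h2)
  le_trans := fun u v w h1 h2 => c.le_trans _ _ _ h1 h2
  downChain := fun u v w h1 h2 => c.downChain _ _ _ h1 h2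
  peb := fun v => c.peb (e v)
  cover := fun u v h => c.cover (e.map_adj_iff.mpr h)
  pebbleCond := fun u v w hadj h1 h2 h3 hne =>
    c.pebbleCond (e.map_adj_iff.mpr hadj) h1 h2 h3 (fun h => hne (e.injective h))
  heightLE := by
    intro v
    have himg : (fun x => e x) '' {u | c.le (e u) (e v)} = {x | c.le x (e v)} := by
      ext x
      constructor
      · rintro ⟨y, hy, rfl⟩; exact hy
      · intro hx
        exact ⟨e.symm x, by simpa using hx, by simp⟩
    calc {u | c.le (e u) (e v)}.ncard
        = ((fun x => e x) '' {u | c.le (e u) (e v)}).ncard :=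
          (Set.ncard_image_of_injective _ e.injective).symm
      _ = {x | c.le x (e v)}.ncard := by rw [himg]
      _ ≤ q := c.heightLE _

/-- A pebble forest cover of the disjoint union. -/
noncomputable def pfcSum {V W : Type*} {G : SimpleGraph V} {H : SimpleGraph W}
    (cG : PebbleForestCover G k q) (cH : PebbleForestCover H k q) :
    PebbleForestCover (sumGraph G H) k q where
  le := fun x y =>
    match x, y with
    | Sum.inl a, Sum.inl b => cG.le a b
    | Sum.inr a, Sum.inr b => cH.le a b
    | _, _ => False
  le_refl := by rintro (a | a); exacts [cG.le_refl a, cH.le_refl a]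
  le_antisymm := by
    rintro (a | a) (b | b) h1 h2
    · rw [cG.le_antisymm a b h1 h2]
    · exact h1.elim
    · exact h1.elim
    · rw [cH.le_antisymm a b h1 h2]
  le_trans := by
    rintro (a | a) (b | b) (c | c) h1 h2 <;> first
      | exact h1.elim | exact h2.elim
      | exact cG.le_trans _ _ _ h1 h2 | exact cH.le_trans _ _ _ h1 h2
  downChain := by
    rintro (a | a) (b | b) (c | c) h1 h2 <;> first
      | exact h1.elim | exact h2.elim
      | exact cG.downChain _ _ _ h1 h2 | exact cH.downChain _ _ _ h1 h2
  peb := fun x => match x with | Sum.inl a => cG.peb a | Sum.inr a => cH.peb a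
  cover := by
    rintro (a | a) (b | b) h
    · exact cG.cover h
    · exact h.elim
    · exact h.elim
    · exact cH.cover h
  pebbleCond := by
    rintro (a | a) (b | b) (c | c) hadj h1 h2 h3 hne <;> first
      | exact hadj.elim | exact h1.elim | exact h2.elim | exact h3.elim
      | exact cG.pebbleCond hadj h1 h2 h3 (fun h => hne (by rw [h]))
      | exact cH.pebbleCond hadj h1 h2 h3 (fun h => hne (by rw [h]))
  heightLE := by
    rintro (v | v)
    · have himg : {u | match u, Sum.inl v with
          | Sum.inl a, Sum.inl b => cG.le a b
          | Sum.inr a, Sum.inr b => cH.le a b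
          | _, _ => False} = Sum.inl '' {u | cG.le u v} := by
        ext (u | u)
        · simp only [Set.mem_setOf_eq, Set.mem_image]
          constructor
          · intro h; exact ⟨u, h, rfl⟩
          · rintro ⟨a, ha, hh⟩; cases hh; exact ha
        · simp only [Set.mem_setOf_eq, Set.mem_image]
          constructor
          · intro h; exact h.elim
          · rintro ⟨a, ha, hh⟩; cases hh
      rw [himg, Set.ncard_image_of_injective _ Sum.inl_injective]
      exact cG.heightLE v
    · have himg : {u | match u, Sum.inr v with
          | Sum.inl a, Sum.inl b => cG.le a b
          | Sum.inr a, Sum.inr b => cH.le a b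
          | _, _ => False} = Sum.inr '' {u | cH.le u v} := by
        ext (u | u)
        · simp only [Set.mem_setOf_eq, Set.mem_image]
          constructor
          · intro h; exact h.elim
          · rintro ⟨a, ha, hh⟩; cases hh
        · simp only [Set.mem_setOf_eq, Set.mem_image]
          constructor
          · intro h; exact ⟨u, h, rfl⟩
          · rintro ⟨a, ha, hh⟩; cases hh; exact ha
      rw [himg, Set.ncard_image_of_injective _ Sum.inr_injective]
      exact cH.heightLE v

end Sum
namespace Bag

section TreeD
variable {m k q : ℕ} {G : SimpleGraph (Fin m)} (B : Bag G k q)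

lemma exists_parent (v : Fin m) (h2 : 2 ≤ B.d v) :
    ∃ u, B.le u v ∧ u ≠ v ∧ B.d u + 1 = B.d v := by
  classical
  set A : Finset (Fin m) := (Set.toFinite {u | B.le u v}).toFinset with hA
  have hAmem : ∀ u, u ∈ A ↔ B.le u v := fun u => Set.Finite.mem_toFinset _
  have hAcard : A.card = B.d v := (Set.ncard_eq_toFinset_card _ _).symm
  have hinj : Set.InjOn B.d A := by
    intro a ha b hb hab
    rcases B.downChain a b v ((hAmem a).mp ha) ((hAmem b).mp hb) with h | h
    · exact B.eq_of_le_of_d_le h hab.ge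
    · exact (B.eq_of_le_of_d_le h hab.le).symm
  have hsub : A.image B.d ⊆ Finset.Icc 1 (B.d v) := by
    intro n hn
    rw [Finset.mem_image] at hn
    obtain ⟨u, hu, rfl⟩ := hn
    exact Finset.mem_Icc.mpr ⟨B.d_pos u, B.d_mono ((hAmem u).mp hu)⟩
  have hcard : (A.image B.d).card = B.d v := by
    rw [Finset.card_image_of_injOn hinj, hAcard]
  have heq : A.image B.d = Finset.Icc 1 (B.d v) := by
    apply Finset.eq_of_subset_of_card_le hsub
    rw [hcard, Nat.card_Icc]
    omega
  have hmem : B.d v - 1 ∈ A.image B.d := by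
    rw [heq, Finset.mem_Icc]
    omega
  rw [Finset.mem_image] at hmem
  obtain ⟨u, hu, hdu⟩ := hmem
  refine ⟨u, (hAmem u).mp hu, ?_, by omega⟩
  intro h
  rw [h] at hdu
  omega

/-- The parent node of a vertex in the decomposition tree (the root `Fin.last m`
if the vertex is a root of the forest). -/
noncomputable def par (v : Fin m) : Fin (m+1) :=
  if h : 2 ≤ B.d v then Fin.castSucc (B.exists_parent v h).choose else Fin.last m

lemma par_cases (v : Fin m) :
    (B.par v = Fin.last m ∧ B.d v = 1) ∨
    (∃ u, B.par v = Fin.castSucc u ∧ B.le u v ∧ u ≠ v ∧ B.d u + 1 = B.d v) := by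
  unfold par
  by_cases h : 2 ≤ B.d v
  · right
    exact ⟨(B.exists_parent v h).choose, by rw [dif_pos h],
      (B.exists_parent v h).choose_spec.1, (B.exists_parent v h).choose_spec.2.1,
      (B.exists_parent v h).choose_spec.2.2⟩
  · left
    have := B.d_pos v
    exact ⟨by rw [dif_neg h], by omega⟩

/-- The decomposition tree: each vertex is joined to its parent. -/
noncomputable def decompT : SimpleGraph (Fin (m+1)) where
  Adj x y := (∃ v : Fin m, y = Fin.castSucc v ∧ x = B.par v) ∨
    (∃ v : Fin m, x = Fin.castSucc v ∧ y = B.par v)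
  symm := by
    constructor
    rintro x y (h | h)
    · exact Or.inr h
    · exact Or.inl h
  loopless := by
    constructor
    rintro x (⟨v, rfl, hpar⟩ | ⟨v, rfl, hpar⟩) <;>
    · rcases B.par_cases v with ⟨h, _⟩ | ⟨u, h, _, hne, hd⟩
      · rw [h] at hpar
        exact (Fin.castSucc_lt_last v).ne hpar
      · rw [h] at hpar
        exact hne (Fin.castSucc_injective m hpar.symm)

/-- The ancestor order on nodes of the decomposition tree. -/
def nodeLe (a b : Fin (m+1)) : Prop :=
  a = Fin.last m ∨ ∃ u v : Fin m, a = Fin.castSucc u ∧ b = Fin.castSucc v ∧ B.le u v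

lemma nodeLe_cs {u v : Fin m} :
    B.nodeLe (Fin.castSucc u) (Fin.castSucc v) ↔ B.le u v := by
  constructor
  · rintro (h | ⟨u', v', hu, hv, h⟩)
    · exact absurd h (Fin.castSucc_lt_last u).ne
    · rwa [Fin.castSucc_inj.mp hu, Fin.castSucc_inj.mp hv]
  · intro h
    exact Or.inr ⟨u, v, rfl, rfl, h⟩

lemma cross_edge {v : Fin m} {a b : Fin (m+1)} (hadj : (B.decompT).Adj a b)
    (ha : B.nodeLe (Fin.castSucc v) a) (hb : ¬ B.nodeLe (Fin.castSucc v) b) :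
    s(a, b) = s(B.par v, Fin.castSucc v) := by
  obtain ⟨u', a', hu', ha', hva'⟩ : ∃ u' a', Fin.castSucc v = Fin.castSucc u' ∧
      a = Fin.castSucc a' ∧ B.le u' a' := by
    rcases ha with h | h
    · exact absurd h (Fin.castSucc_lt_last v).ne
    · exact h
  cases Fin.castSucc_inj.mp hu'
  rcases hadj with ⟨w, hbw, haw⟩ | ⟨w, haw, hbw⟩
  · -- a is the parent of w, b = castSucc w
    exfalso
    rcases B.par_cases w with ⟨h, _⟩ | ⟨u, h, hle, _, _⟩
    · rw [haw, h] at ha'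
      exact (Fin.castSucc_lt_last a').ne ha'.symm
    · rw [haw, h] at ha'
      cases Fin.castSucc_inj.mp ha'
      exact hb (hbw ▸ (B.nodeLe_cs.mpr (B.trans _ _ _ hva' hle)))
  · -- a = castSucc w, b is the parent of w
    rw [haw] at ha'
    cases Fin.castSucc_inj.mp ha'
    by_cases hwv : a' = v
    · rw [haw, hbw, hwv, Sym2.eq_swap]
    · have hdlt : B.d v < B.d a' := B.d_lt_of_ne hva' (fun h => hwv h.symm)
      have h2 : 2 ≤ B.d a' := by have := B.d_pos v; omega
      rcases B.par_cases a' with ⟨h, hd1⟩ | ⟨u, h, hle, hne, hd⟩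
      · omega
      · exfalso
        apply hb
        rw [hbw, h, B.nodeLe_cs]
        rcases B.downChain v u a' hva' hle with h' | h'
        · exact h'
        · have : u = v := B.eq_of_le_of_d_le h' (by omega)
          rw [this]
          exact B.refl v
lemma walk_stay {v : Fin m} :
    ∀ {c d : Fin (m+1)} (p : (B.decompT).Walk c d),
      s(B.par v, Fin.castSucc v) ∉ p.edges →
      B.nodeLe (Fin.castSucc v) c → B.nodeLe (Fin.castSucc v) d := by
  intro c d p
  induction p with
  | nil => exact fun _ h => h
  | @cons c e d hadj p ih =>
    intro hne hc
    rw [SimpleGraph.Walk.edges_cons] at hne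
    by_cases he : B.nodeLe (Fin.castSucc v) e
    · exact ih (fun h => hne (List.mem_cons_of_mem _ h)) he
    · exact absurd (B.cross_edge hadj hc he ▸ List.mem_cons_self) hne

lemma decompT_isAcyclic : (B.decompT).IsAcyclic := by
  rw [SimpleGraph.isAcyclic_iff_forall_adj_isBridge]
  intro x y hadj
  rw [SimpleGraph.isBridge_iff_adj_and_forall_walk_mem_edges]
  have main : ∀ v : Fin m, ∀ p : (B.decompT).Walk (Fin.castSucc v) (B.par v),
      s(B.par v, Fin.castSucc v) ∈ p.edges := by
    intro v p
    by_contra hne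
    have hstart : B.nodeLe (Fin.castSucc v) (Fin.castSucc v) := B.nodeLe_cs.mpr (B.refl v)
    have hend := B.walk_stay p hne hstart
    rcases B.par_cases v with ⟨h, _⟩ | ⟨u, h, hle, hnev, hd⟩
    · rw [h] at hend
      rcases hend with h' | ⟨u', v', hu', hv', _⟩
      · exact (Fin.castSucc_lt_last v).ne h'
      · exact (Fin.castSucc_lt_last v').ne hv'.symm
    · rw [h, B.nodeLe_cs] at hend
      have : v = u := B.antisymm v u hend hle
      rw [this] at hd
      omega
  rcases hadj with ⟨v, hy, hx⟩ | ⟨v, hx, hy⟩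
  · subst hy; subst hx
    intro p
    have := main v p.reverse
    rwa [SimpleGraph.Walk.edges_reverse, List.mem_reverse] at this
  · subst hx; subst hy
    intro p
    rw [Sym2.eq_swap]
    exact main v p

lemma decompT_reach_root : ∀ (n : ℕ) (v : Fin m), B.d v ≤ n →
    (B.decompT).Reachable (Fin.castSucc v) (Fin.last m) := by
  intro n
  induction n with
  | zero => intro v hv; have := B.d_pos v; omega
  | succ n ih =>
    intro v hv
    have hadj : (B.decompT).Adj (Fin.castSucc v) (B.par v) := Or.inr ⟨v, rfl, rfl⟩
    rcases B.par_cases v with ⟨h, _⟩ | ⟨u, h, hle, hne, hd⟩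
    · exact h ▸ hadj.reachable
    · have hdu : B.d u ≤ n := by
        have := B.d_lt_of_ne hle hne
        omega
      exact (h ▸ hadj.reachable).trans (ih u hdu)

lemma decompT_connected : (B.decompT).Connected := by
  have hroot : ∀ x : Fin (m+1), (B.decompT).Reachable x (Fin.last m) := by
    intro x
    refine Fin.lastCases ?_ ?_ x
    · exact SimpleGraph.Reachable.refl _
    · intro v
      exact B.decompT_reach_root (B.d v) v le_rfl
  exact SimpleGraph.Connected.mk (fun x y => (hroot x).trans (hroot y).symm)

/-- The bags of the tree decomposition. -/
noncomputable def bagT : Fin (m+1) → Set (Fin m) :=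
  fun t => Fin.lastCases (motive := fun _ => Set (Fin m)) ∅ (fun v => B.bag v) t

lemma bagT_cs (v : Fin m) : B.bagT (Fin.castSucc v) = B.bag v := by
  unfold bagT
  rw [Fin.lastCases_castSucc]

lemma bagT_last : B.bagT (Fin.last m) = ∅ := by
  unfold bagT
  rw [Fin.lastCases_last]

/-- The tree decomposition associated to a bag system. -/
noncomputable def toTreeDecomp : TreeDecomp G where
  n := m + 1
  T := B.decompT
  isTree := ⟨B.decompT_connected, B.decompT_isAcyclic⟩
  bag := B.bagT
  coversVerts := fun v => ⟨Fin.castSucc v, by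
    rw [B.bagT_cs]
    exact B.mem_self v⟩
  coversEdges := by
    intro u v hadj
    rcases B.cover hadj with h | h
    · exact ⟨Fin.castSucc v, by
        rw [B.bagT_cs]
        exact ⟨B.edge_mem hadj h, B.mem_self v⟩⟩
    · exact ⟨Fin.castSucc u, by
        rw [B.bagT_cs]
        exact ⟨B.mem_self u, B.edge_mem hadj.symm h⟩⟩
  bagsConnected := by
    intro x
    have hmemS : ∀ v : Fin m, Fin.castSucc v ∈ {t | x ∈ B.bagT t} ↔ x ∈ B.bag v := by
      intro v
      rw [Set.mem_setOf_eq, B.bagT_cs]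
    have hxS : Fin.castSucc x ∈ {t | x ∈ B.bagT t} := (hmemS x).mpr (B.mem_self x)
    have hreach : ∀ (n : ℕ) (v : Fin m) (hv : x ∈ B.bag v), B.d v ≤ n →
        (SimpleGraph.induce {t | x ∈ B.bagT t} (B.decompT)).Reachable
          ⟨Fin.castSucc v, (hmemS v).mpr hv⟩ ⟨Fin.castSucc x, hxS⟩ := by
      intro n
      induction n with
      | zero => intro v hv hd; have := B.d_pos v; omega
      | succ n ih =>
        intro v hv hd
        by_cases hvx : v = x
        · subst hvx
          exact SimpleGraph.Reachable.refl _
        · have hxv : B.le x v := B.bag_sub v x hv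
          have hxnev : x ≠ v := fun h => hvx h.symm
          have hdx : B.d x < B.d v := B.d_lt_of_ne hxv hxnev
          have h2 : 2 ≤ B.d v := by have := B.d_pos x; omega
          rcases B.par_cases v with ⟨h, hd1⟩ | ⟨u, h, hle, hne, hdu⟩
          · omega
          · have hxu : B.le x u := by
              rcases B.downChain x u v hxv hle with h' | h'
              · exact h'
              · have : u = x := B.eq_of_le_of_d_le h' (by omega)
                rw [this]; exact B.refl x
            have hxbu : x ∈ B.bag u := B.nest x v u hv hxu hle
            have hadj : (SimpleGraph.induce {t | x ∈ B.bagT t} (B.decompT)).Adj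
                ⟨Fin.castSucc v, (hmemS v).mpr hv⟩ ⟨Fin.castSucc u, (hmemS u).mpr hxbu⟩ := by
              show (B.decompT).Adj (Fin.castSucc v) (Fin.castSucc u)
              exact Or.inr ⟨v, rfl, h.symm⟩
            exact hadj.reachable.trans (ih u hxbu (by omega))
    have hto : ∀ a : ↥{t | x ∈ B.bagT t},
        (SimpleGraph.induce {t | x ∈ B.bagT t} (B.decompT)).Reachable a ⟨Fin.castSucc x, hxS⟩ := by
      intro a
      have hanl : (a : Fin (m+1)) ≠ Fin.last m := by
        intro h
        have ha : x ∈ B.bagT (a : Fin (m+1)) := a.2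
        rw [h, B.bagT_last] at ha
        exact absurd ha (Set.notMem_empty x)
      obtain ⟨va, hva⟩ := Fin.exists_castSucc_eq.mpr hanl
      have hmem : x ∈ B.bag va := by
        have ha : x ∈ B.bagT (a : Fin (m+1)) := a.2
        rwa [← hva, B.bagT_cs] at ha
      have heq : (⟨Fin.castSucc va, (hmemS va).mpr hmem⟩ : ↥{t | x ∈ B.bagT t}) = a :=
        Subtype.ext hva
      rw [← heq]
      exact hreach (B.d va) va hmem le_rfl
    haveI : Nonempty ↥{t | x ∈ B.bagT t} := ⟨⟨Fin.castSucc x, hxS⟩⟩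
    exact SimpleGraph.Connected.mk (fun a b => (hto a).trans (hto b).symm)

lemma toTreeDecomp_width (hk : 1 ≤ k) : (B.toTreeDecomp).widthLE (k - 1) := by
  intro t
  show (B.bagT t).ncard ≤ k - 1 + 1
  have hk1 : k - 1 + 1 = k := by omega
  rw [hk1]
  refine Fin.lastCases ?_ ?_ t
  · rw [B.bagT_last]
    simp
  · intro v
    rw [B.bagT_cs]
    exact B.bag_card v

end TreeD
end Bag

end TCPaux

theorem Tclass_closure_properties' (k q : ℕ) (hk : 1 ≤ k) (hq : 1 ≤ q) :
    (∀ G ∈ Tclass k q, ∀ H : GraphB, IsMinor H.2 G.2 → H ∈ Tclass k q) ∧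
    (∀ G ∈ Tclass k q, ∀ H ∈ Tclass k q, ∀ D : GraphB,
        Nonempty (D.2 ≃g sumGraph G.2 H.2) → D ∈ Tclass k q) ∧
    Tclass k q ⊆ TWclass (k - 1) ∩ TDclass q := by
  refine ⟨?_, ?_, ?_⟩
  · rintro G ⟨c⟩ H ⟨φ, hconn, hedge⟩
    exact ⟨((TCPaux.Bag.ofPFC c).ofMinor φ hconn hedge).toPFC hk⟩
  · rintro G ⟨cG⟩ H ⟨cH⟩ D ⟨e⟩
    exact ⟨TCPaux.pfcOfIso e (TCPaux.pfcSum cG cH)⟩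
  · rintro G ⟨c⟩
    refine ⟨⟨(TCPaux.Bag.ofPFC c).toTreeDecomp, (TCPaux.Bag.ofPFC c).toTreeDecomp_width hk⟩, ?_⟩
    exact ⟨c.le, c.le_refl, c.le_antisymm, c.le_trans, c.downChain, c.cover, c.heightLE⟩
/-- `T^k_q` is minor-closed, closed under disjoint unions, and a subclass of
`TW_{k−1} ∩ TD_q`. -/
theorem Tclass_closure_properties (k q : ℕ) (hk : 1 ≤ k) (hq : 1 ≤ q) :
    (∀ G ∈ Tclass k q, ∀ H : GraphB, IsMinor H.2 G.2 → H ∈ Tclass k q) ∧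
    (∀ G ∈ Tclass k q, ∀ H ∈ Tclass k q, ∀ D : GraphB,
        Nonempty (D.2 ≃g sumGraph G.2 H.2) → D ∈ Tclass k q) ∧
    Tclass k q ⊆ TWclass (k - 1) ∩ TDclass q := by
  exact Tclass_closure_properties' k q hk hq
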